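/- Fix ρ ∈ (0,1] and set ω := 0, h₀ := 1/(1+√ρ), and let c₀ ∈ ℝ satisfy c₀² = (1−ρ)/(1+√ρ)². Then for every ε ∈ ℝ one has P(h₀ + ε, h₀, c₀) = 0 and S(h₀ + ε, h₀, c₀) = 0. In particular, for each ε the triple (h, h₊, c) = (h₀ + ε, h₀, c₀) is an exact solution of the conjugate flow equations: the downstream depth and Froude number of the family of irrotational conjugate flows are constant in ε. -/
import Mathlib


open Real Set

/-- The first conjugate-flow polynomial `P(h, h₊, c)` (with parameters ρ, ω). -/
noncomputable def Pfun (ρ ω h hp c : ℝ) : ℝ :=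
  ω ^ 2 * hp ^ 2 * (hp - h) * (2 - hp - h) ^ 2 * ρ
    + 4 * hp ^ 2 * (2 * hp ^ 2 - c ^ 2 * hp - 4 * hp - c ^ 2 * h + 2 * c ^ 2 + 2) * ρ
    + 4 * c * ω * (1 - h) * hp ^ 2 * (2 - hp - h) * ρ
    - 4 * (1 - hp) ^ 2 * (2 * hp ^ 2 - c ^ 2 * hp - c ^ 2 * h)

/-- The flow-force conjugate-flow polynomial `S(h, h₊, c)` (with parameters ρ, ω). -/
noncomputable def Sfun (ρ ω h hp c : ℝ) : ℝ :=
  ω ^ 2 * hp * (hp - h) * (hp + 3 * h - 4) * ρ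
    + 12 * hp * (hp - c ^ 2 - 1) * ρ
    + 12 * c * ω * (h - 1) * hp * ρ
    - 12 * (hp - 1) * (hp - c ^ 2)

/-- The family of irrotational conjugate flows has constant downstream depth and
Froude number: with ω = 0, h₀ = 1/(1+√ρ) and c₀² = (1−ρ)/(1+√ρ)², the triple
(h₀ + ε, h₀, c₀) solves the conjugate flow equations for every ε. -/
theorem irrotational_conjugate_flows_exact (ρ c₀ : ℝ) (hρ : ρ ∈ Ioc (0 : ℝ) 1)
    (hc₀ : c₀ ^ 2 = (1 - ρ) / (1 + Real.sqrt ρ) ^ 2) :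
    ∀ ε : ℝ,
      Pfun ρ 0 (1 / (1 + Real.sqrt ρ) + ε) (1 / (1 + Real.sqrt ρ)) c₀ = 0 ∧
      Sfun ρ 0 (1 / (1 + Real.sqrt ρ) + ε) (1 / (1 + Real.sqrt ρ)) c₀ = 0 := by
  intro ε
  set s := Real.sqrt ρ with hs
  have hs2 : s ^ 2 = ρ := Real.sq_sqrt hρ.1.le
  have hspos : 0 ≤ s := Real.sqrt_nonneg ρ
  have h1 : (1 : ℝ) + s ≠ 0 := by positivity
  constructor <;> · simp only [Pfun, Sfun, hc₀, ← hs2]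
                    field_simp
                    ring
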